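/- Let n ≥ 1, let F : ℝⁿ × ℝ → ℝ be continuous with compact support contained in B(x₀, r) × [0, h] for some r, h > 0 and x₀ ∈ ℝⁿ, and let y₀ > 0. Define G(v) = |∫_{ℝⁿ} F(x₀ + v + u, y₀ + |v|² − |u|²) du| for v ∈ ℝⁿ. Then limsup_{|v|→∞} |v| · G(v) ≤ (sup |F|)/2 · |B^{n−1}| · r^{n−1} · h, where |B^{n−1}| is the volume of the unit ball in ℝ^{n−1} (with |B⁰| = 1). -/

import Mathlib

open MeasureTheory Filter Metric Set

lemma slice_vol {V r y₀ h c : ℝ} (hr : 0 < r) (hV : r < V) (hc : 0 ≤ c) :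
    volume {t : ℝ | t ^ 2 + c < r ^ 2 ∧ y₀ + 2 * (V * t) - (t ^ 2 + c) ∈ Set.Icc 0 h}
      ≤ ENNReal.ofReal (h / (2 * (V - r))) := by
  refine (Real.volume_le_diam _).trans (EMetric.diam_le ?_)
  have key : ∀ s t : ℝ, (s ^ 2 + c < r ^ 2 ∧ y₀ + 2 * (V * s) - (s ^ 2 + c) ∈ Set.Icc 0 h) →
      (t ^ 2 + c < r ^ 2 ∧ y₀ + 2 * (V * t) - (t ^ 2 + c) ∈ Set.Icc 0 h) →
      s ≤ t → t - s ≤ h / (2 * (V - r)) := by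
    rintro s t ⟨hs1, hs2⟩ ⟨ht1, ht2⟩ hst
    have hts : t ≤ r := by nlinarith
    have hss : -r ≤ s := by nlinarith
    rw [le_div_iff₀ (by linarith)]
    have h1 : y₀ + 2 * (V * t) - (t ^ 2 + c) ≤ h := ht2.2
    have h2 : 0 ≤ y₀ + 2 * (V * s) - (s ^ 2 + c) := hs2.1
    nlinarith [mul_nonneg (sub_nonneg.2 hst) (by linarith : (0:ℝ) ≤ 2 * r - t - s)]
  intro t₁ h₁ t₂ h₂
  rw [edist_dist, Real.dist_eq]
  refine ENNReal.ofReal_le_ofReal ?_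
  rcases le_total t₁ t₂ with hle | hle
  · rw [abs_sub_comm, abs_of_nonneg (by linarith)]
    exact key t₁ t₂ h₁ h₂ hle
  · rw [abs_of_nonneg (by linarith)]
    exact key t₂ t₁ h₂ h₁ hle

lemma vol_Aw (m : ℕ) {r h y₀ : ℝ} (hr : 0 < r) (hh : 0 < h)
    (v : EuclideanSpace ℝ (Fin (m + 1))) (hv : r < ‖v‖) :
    volume {w : EuclideanSpace ℝ (Fin (m + 1)) |
        ‖w‖ < r ∧ y₀ + 2 * (inner ℝ w v : ℝ) - ‖w‖ ^ 2 ∈ Set.Icc 0 h}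
      ≤ ENNReal.ofReal (h / (2 * (‖v‖ - r))) * (ENNReal.ofReal (r ^ m) *
          volume (Metric.ball (0 : EuclideanSpace ℝ (Fin m)) 1)) := by
  set V : ℝ := ‖v‖ with hVdef
  have hV0 : 0 < V := hr.trans hv
  set e : EuclideanSpace ℝ (Fin (m + 1)) := V⁻¹ • v with hedef
  have he : ‖e‖ = 1 := by
    rw [hedef, norm_smul, norm_inv, Real.norm_eq_abs, abs_of_pos hV0]
    field_simp
    exact hVdef.symm
  have hve : V • e = v := by
    rw [hedef, smul_smul, mul_inv_cancel₀ hV0.ne', one_smul]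
  -- orthonormal basis with b 0 = e
  have horth : Orthonormal ℝ (Set.restrict {0} fun _ : Fin (m + 1) => e) := by
    refine ⟨fun i => he, fun i j hij => ?_⟩
    exfalso
    exact hij (Subtype.ext (i.2.trans j.2.symm))
  obtain ⟨b, hb0⟩ := horth.exists_orthonormalBasis_extension_of_card_eq
    (by simp [finrank_euclideanSpace_fin])
  have hb0' : b 0 = e := hb0 0 rfl
  -- the measure preserving map
  set Φ : EuclideanSpace ℝ (Fin (m + 1)) → ℝ × (Fin m → ℝ) :=
    (MeasurableEquiv.piFinSuccAbove (fun _ : Fin (m + 1) => ℝ) 0) ∘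
      (MeasurableEquiv.toLp 2 (Fin (m + 1) → ℝ)).symm ∘ b.repr with hΦdef
  have hΦ : MeasurePreserving Φ volume volume :=
    ((volume_preserving_piFinSuccAbove (fun _ : Fin (m + 1) => ℝ) 0).comp
      ((EuclideanSpace.volume_preserving_symm_measurableEquiv_toLp (Fin (m + 1))).comp
        b.measurePreserving_repr))
  set S : Set (ℝ × (Fin m → ℝ)) := {p | p.1 ^ 2 + ∑ j, p.2 j ^ 2 < r ^ 2 ∧
      y₀ + 2 * (V * p.1) - (p.1 ^ 2 + ∑ j, p.2 j ^ 2) ∈ Set.Icc 0 h} with hSdef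
  have hSmeas : MeasurableSet S := by
    have hm1 : Measurable fun p : ℝ × (Fin m → ℝ) => p.1 ^ 2 + ∑ j, p.2 j ^ 2 := by
      fun_prop
    have hm2 : Measurable fun p : ℝ × (Fin m → ℝ) =>
        y₀ + 2 * (V * p.1) - (p.1 ^ 2 + ∑ j, p.2 j ^ 2) := by fun_prop
    exact (hm1 measurableSet_Iio).inter (hm2 measurableSet_Icc)
  have hset : {w : EuclideanSpace ℝ (Fin (m + 1)) |
      ‖w‖ < r ∧ y₀ + 2 * (inner ℝ w v : ℝ) - ‖w‖ ^ 2 ∈ Set.Icc 0 h} = Φ ⁻¹' S := by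
    ext w
    have hΦw : Φ w = (b.repr w 0, fun j => b.repr w (Fin.succAbove 0 j)) := rfl
    have hsum : (b.repr w 0) ^ 2 + ∑ j, b.repr w (Fin.succAbove 0 j) ^ 2 = ‖w‖ ^ 2 := by
      rw [← Fin.sum_univ_succAbove (fun i => b.repr w i ^ 2) 0]
      have h1 : ‖b.repr w‖ ^ 2 = ∑ i, b.repr w i ^ 2 := by
        rw [EuclideanSpace.norm_eq, Real.sq_sqrt (by positivity)]
        simp [sq_abs]
      rw [← h1, b.repr.norm_map]
    have hinner : (inner ℝ w v : ℝ) = V * b.repr w 0 := by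
      rw [b.repr_apply_apply, hb0', ← hve]
      rw [hedef, real_inner_smul_left, real_inner_comm]
      field_simp
      rw [smul_smul, mul_one_div_cancel hV0.ne', one_smul]
    simp only [Set.mem_setOf_eq, Set.mem_preimage, hΦw, hSdef, hsum, hinner]
    have hlt : ‖w‖ < r ↔ ‖w‖ ^ 2 < r ^ 2 := by
      constructor <;> intro hx <;> nlinarith [norm_nonneg w]
    exact and_congr hlt Iff.rfl
  rw [hset, hΦ.measure_preimage hSmeas.nullMeasurableSet]
  -- now bound the product measure of S
  have hB'meas : MeasurableSet {x' : Fin m → ℝ | ∑ j, x' j ^ 2 < r ^ 2} := by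
    have : Measurable fun x' : Fin m → ℝ => ∑ j, x' j ^ 2 := by fun_prop
    exact this measurableSet_Iio
  have hslice : ∀ x' : Fin m → ℝ, volume ((fun t => (t, x')) ⁻¹' S) ≤
      Set.indicator {x' : Fin m → ℝ | ∑ j, x' j ^ 2 < r ^ 2}
        (fun _ => ENNReal.ofReal (h / (2 * (V - r)))) x' := by
    intro x'
    by_cases hx' : x' ∈ {x' : Fin m → ℝ | ∑ j, x' j ^ 2 < r ^ 2}
    · rw [Set.indicator_of_mem hx']
      have heq : (fun t => (t, x')) ⁻¹' S = {t : ℝ | t ^ 2 + ∑ j, x' j ^ 2 < r ^ 2 ∧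
          y₀ + 2 * (V * t) - (t ^ 2 + ∑ j, x' j ^ 2) ∈ Set.Icc 0 h} := rfl
      rw [heq]
      exact slice_vol hr hv (by positivity)
      
    · rw [Set.indicator_of_notMem hx']
      have heq : (fun t => (t, x')) ⁻¹' S = ∅ := by
        ext t
        simp only [Set.mem_preimage, hSdef, Set.mem_setOf_eq, Set.mem_empty_iff_false,
          iff_false, not_and]
        intro h1
        exact absurd (lt_of_le_of_lt (by nlinarith [sq_nonneg t]) h1) hx'
      rw [heq, measure_empty]
  have hvolB : volume {x' : Fin m → ℝ | ∑ j, x' j ^ 2 < r ^ 2} =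
      volume (Metric.ball (0 : EuclideanSpace ℝ (Fin m)) r) := by
    rw [← (EuclideanSpace.volume_preserving_symm_measurableEquiv_toLp (Fin m)).measure_preimage
      hB'meas.nullMeasurableSet]
    congr 1
    ext y
    simp only [Set.mem_preimage, Set.mem_setOf_eq, Metric.mem_ball, dist_zero_right]
    have h1 : ∑ j, ((MeasurableEquiv.toLp 2 (Fin m → ℝ)).symm y) j ^ 2 = ‖y‖ ^ 2 := by
      rw [EuclideanSpace.norm_eq, Real.sq_sqrt (by positivity)]
      simp only [Real.norm_eq_abs, sq_abs]
      rfl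
    rw [h1]
    constructor <;> intro hx <;> nlinarith [norm_nonneg y]
  have hball : volume (Metric.ball (0 : EuclideanSpace ℝ (Fin m)) r) =
      ENNReal.ofReal (r ^ m) * volume (Metric.ball (0 : EuclideanSpace ℝ (Fin m)) 1) := by
    rcases Nat.eq_zero_or_pos m with hm | hm
    · subst hm
      have huniv : ∀ (ρ : ℝ), 0 < ρ →
          Metric.ball (0 : EuclideanSpace ℝ (Fin 0)) ρ = Set.univ := by
        intro ρ hρ
        refine Set.eq_univ_of_forall fun y => ?_
        have : ‖y‖ = 0 := by
          rw [EuclideanSpace.norm_eq]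
          simp
        simp [Metric.mem_ball, dist_zero_right, this, hρ]
      rw [huniv r hr, huniv 1 one_pos]
      simp
    · haveI : Nontrivial (EuclideanSpace ℝ (Fin m)) := by
        apply nontrivial_of_ne (EuclideanSpace.single ⟨0, hm⟩ (1:ℝ)) 0
        intro hcon
        have := congrArg norm hcon
        simp [EuclideanSpace.norm_single] at this
      rw [Measure.addHaar_ball volume _ hr.le, finrank_euclideanSpace_fin]
  calc volume.prod volume S = ∫⁻ x', volume ((fun t => (t, x')) ⁻¹' S) := by
        rw [Measure.prod_apply_symm hSmeas]
    _ ≤ ∫⁻ x', Set.indicator {x' : Fin m → ℝ | ∑ j, x' j ^ 2 < r ^ 2}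
          (fun _ => ENNReal.ofReal (h / (2 * (V - r)))) x' := lintegral_mono hslice
    _ = ENNReal.ofReal (h / (2 * (V - r))) *
          volume {x' : Fin m → ℝ | ∑ j, x' j ^ 2 < r ^ 2} := by
        rw [lintegral_indicator hB'meas, setLIntegral_const]
    _ = ENNReal.ofReal (h / (2 * (V - r))) * (ENNReal.ofReal (r ^ m) *
          volume (Metric.ball (0 : EuclideanSpace ℝ (Fin m)) 1)) := by
        rw [hvolB, hball]

theorem stmt4 (n : ℕ) (hn : 1 ≤ n) (F : EuclideanSpace ℝ (Fin n) × ℝ → ℝ)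
    (hF : Continuous F) (hFc : HasCompactSupport F)
    (x₀ : EuclideanSpace ℝ (Fin n)) (r h y₀ : ℝ)
    (hr : 0 < r) (hh : 0 < h) (hy₀ : 0 < y₀)
    (hsupp : Function.support F ⊆ Metric.ball x₀ r ×ˢ Set.Icc 0 h) :
    Filter.limsup (fun v : EuclideanSpace ℝ (Fin n) =>
        ‖v‖ * |∫ u : EuclideanSpace ℝ (Fin n),
          F (x₀ + v + u, y₀ + ‖v‖ ^ 2 - ‖u‖ ^ 2)|)
      (Filter.comap norm Filter.atTop)
      ≤ (⨆ p, |F p|) / 2 *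
          (volume (Metric.ball (0 : EuclideanSpace ℝ (Fin (n - 1))) 1)).toReal *
          r ^ (n - 1) * h := by
  obtain ⟨m, rfl⟩ : ∃ m, n = m + 1 := ⟨n - 1, (Nat.succ_pred_eq_of_pos hn).symm⟩
  have hBdd : BddAbove (Set.range fun p : EuclideanSpace ℝ (Fin (m + 1)) × ℝ => |F p|) :=
    hF.abs.bddAbove_range_of_hasCompactSupport (hFc.comp_left (g := abs) abs_zero)
  set M : ℝ := ⨆ p, |F p| with hMdef
  have hM : ∀ p, |F p| ≤ M := fun p => le_ciSup hBdd p
  have hM0 : 0 ≤ M := (abs_nonneg _).trans (hM (x₀, 0))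
  set B : ℝ := (volume (Metric.ball (0 : EuclideanSpace ℝ (Fin m)) 1)).toReal with hBdef
  have hB0 : 0 ≤ B := ENNReal.toReal_nonneg
  haveI : Nontrivial (EuclideanSpace ℝ (Fin (m + 1))) := by
    apply nontrivial_of_ne (EuclideanSpace.single 0 (1:ℝ)) 0
    intro hcon
    have := congrArg norm hcon
    simp [EuclideanSpace.norm_single] at this
  haveI : (Filter.comap (norm : EuclideanSpace ℝ (Fin (m + 1)) → ℝ) Filter.atTop).NeBot := by
    rw [comap_norm_atTop]; infer_instance
  set K : ℝ := M * (r ^ m * B) * h with hKdef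
  set ψ : EuclideanSpace ℝ (Fin (m + 1)) → ℝ :=
    fun v => K * (‖v‖ / (2 * (‖v‖ - r))) with hψdef
  -- tendsto of the bounding function
  have hhalf : Filter.Tendsto (fun V : ℝ => V / (2 * (V - r))) Filter.atTop
      (nhds (1 / 2)) := by
    have hden : Filter.Tendsto (fun V : ℝ => 2 * (V - r)) Filter.atTop Filter.atTop :=
      (Filter.tendsto_atTop_add_const_right _ (-r) Filter.tendsto_id).const_mul_atTop two_pos
    have h0 : Filter.Tendsto (fun V : ℝ => r / (2 * (V - r))) Filter.atTop (nhds 0) :=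
      Filter.Tendsto.div_atTop tendsto_const_nhds hden
    have h1 : Filter.Tendsto (fun V : ℝ => 1 / 2 + r / (2 * (V - r))) Filter.atTop
        (nhds (1 / 2)) := by
      have := tendsto_const_nhds (x := (1:ℝ)/2) (f := Filter.atTop (α := ℝ)) |>.add h0
      simpa using this
    refine h1.congr' ?_
    filter_upwards [Filter.eventually_gt_atTop r] with V hV
    have : V - r ≠ 0 := by linarith
    field_simp
    ring
  have hT : Filter.Tendsto ψ (Filter.comap norm Filter.atTop) (nhds (K * (1 / 2))) :=
    ((hhalf.const_mul K).comp Filter.tendsto_comap)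
  -- eventual bound
  have hev : ∀ᶠ v in Filter.comap (norm : EuclideanSpace ℝ (Fin (m + 1)) → ℝ) Filter.atTop,
      ‖v‖ * |∫ u : EuclideanSpace ℝ (Fin (m + 1)),
        F (x₀ + v + u, y₀ + ‖v‖ ^ 2 - ‖u‖ ^ 2)| ≤ ψ v := by
    have hev0 : ∀ᶠ v in Filter.comap (norm : EuclideanSpace ℝ (Fin (m + 1)) → ℝ)
        Filter.atTop, r < ‖v‖ := Filter.tendsto_comap.eventually (Filter.eventually_gt_atTop r)
    filter_upwards [hev0] with v hv
    have hVpos : 0 < ‖v‖ := hr.trans hv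
    set Au : Set (EuclideanSpace ℝ (Fin (m + 1))) :=
      {u | ‖v + u‖ < r ∧ y₀ + ‖v‖ ^ 2 - ‖u‖ ^ 2 ∈ Set.Icc 0 h} with hAudef
    have hAmeas : MeasurableSet Au := by
      have h1 : MeasurableSet {u : EuclideanSpace ℝ (Fin (m + 1)) | ‖v + u‖ < r} := by
        have : Continuous fun u : EuclideanSpace ℝ (Fin (m + 1)) => ‖v + u‖ :=
          (continuous_const.add continuous_id).norm
        exact this.measurable measurableSet_Iio
      have h2 : MeasurableSet {u : EuclideanSpace ℝ (Fin (m + 1)) |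
          y₀ + ‖v‖ ^ 2 - ‖u‖ ^ 2 ∈ Set.Icc 0 h} := by
        have : Continuous fun u : EuclideanSpace ℝ (Fin (m + 1)) =>
            y₀ + ‖v‖ ^ 2 - ‖u‖ ^ 2 := by fun_prop
        exact this.measurable measurableSet_Icc
      exact h1.inter h2
    have hsupp_g : ∀ u, u ∉ Au →
        F (x₀ + v + u, y₀ + ‖v‖ ^ 2 - ‖u‖ ^ 2) = 0 := by
      intro u hu
      by_contra hne
      have hmem := hsupp (Function.mem_support.2 hne)
      rw [Set.mem_prod] at hmem
      refine hu ⟨?_, hmem.2⟩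
      have h3 := hmem.1
      rw [Metric.mem_ball, dist_eq_norm] at h3
      have h4 : x₀ + v + u - x₀ = v + u := by abel
      rwa [h4] at h3
    have hAsub : Au ⊆ Metric.closedBall (-v) r := by
      intro u hu
      rw [Metric.mem_closedBall, dist_eq_norm, sub_neg_eq_add, add_comm u v]
      exact hu.1.le
    have hAu_fin : volume Au < ⊤ :=
      lt_of_le_of_lt (measure_mono hAsub) measure_closedBall_lt_top
    have hint : |∫ u : EuclideanSpace ℝ (Fin (m + 1)),
        F (x₀ + v + u, y₀ + ‖v‖ ^ 2 - ‖u‖ ^ 2)| ≤ M * (volume Au).toReal := by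
      rw [← Real.norm_eq_abs, ← setIntegral_eq_integral_of_forall_compl_eq_zero hsupp_g]
      exact norm_setIntegral_le_of_norm_le_const hAu_fin
        (fun x _ => by rw [Real.norm_eq_abs]; exact hM _)
    have hAu_eq : Au = (fun u => v + u) ⁻¹' {w : EuclideanSpace ℝ (Fin (m + 1)) |
        ‖w‖ < r ∧ y₀ + 2 * (inner ℝ w v : ℝ) - ‖w‖ ^ 2 ∈ Set.Icc 0 h} := by
      ext u
      have hyeq : y₀ + ‖v‖ ^ 2 - ‖u‖ ^ 2 =
          y₀ + 2 * (inner ℝ (v + u) v : ℝ) - ‖v + u‖ ^ 2 := by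
        have hns := norm_sub_sq_real (v + u) v
        rw [add_sub_cancel_left] at hns
        linarith
      simp only [hAudef, Set.mem_setOf_eq, Set.mem_preimage, hyeq]
    have hvol : volume Au ≤ ENNReal.ofReal (h / (2 * (‖v‖ - r))) *
        (ENNReal.ofReal (r ^ m) *
          volume (Metric.ball (0 : EuclideanSpace ℝ (Fin m)) 1)) := by
      rw [hAu_eq, measure_preimage_add]
      exact vol_Aw m hr hh v hv
    have htoReal : (volume Au).toReal ≤ h / (2 * (‖v‖ - r)) * (r ^ m * B) := by
      have hfin : ENNReal.ofReal (h / (2 * (‖v‖ - r))) * (ENNReal.ofReal (r ^ m) *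
          volume (Metric.ball (0 : EuclideanSpace ℝ (Fin m)) 1)) ≠ ⊤ :=
        ENNReal.mul_ne_top ENNReal.ofReal_ne_top
          (ENNReal.mul_ne_top ENNReal.ofReal_ne_top measure_ball_lt_top.ne)
      refine le_trans (ENNReal.toReal_mono hfin hvol) ?_
      rw [ENNReal.toReal_mul, ENNReal.toReal_mul,
        ENNReal.toReal_ofReal (div_nonneg hh.le (by linarith)),
        ENNReal.toReal_ofReal (by positivity)]
    calc ‖v‖ * |∫ u : EuclideanSpace ℝ (Fin (m + 1)),
          F (x₀ + v + u, y₀ + ‖v‖ ^ 2 - ‖u‖ ^ 2)|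
        ≤ ‖v‖ * (M * (h / (2 * (‖v‖ - r)) * (r ^ m * B))) := by
          refine mul_le_mul_of_nonneg_left ?_ (norm_nonneg v)
          exact le_trans hint (mul_le_mul_of_nonneg_left htoReal hM0)
      _ = ψ v := by rw [hψdef, hKdef]; ring
  have hls : Filter.limsup (fun v : EuclideanSpace ℝ (Fin (m + 1)) =>
      ‖v‖ * |∫ u : EuclideanSpace ℝ (Fin (m + 1)),
        F (x₀ + v + u, y₀ + ‖v‖ ^ 2 - ‖u‖ ^ 2)|)
      (Filter.comap norm Filter.atTop)
      ≤ Filter.limsup ψ (Filter.comap norm Filter.atTop) := by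
    refine Filter.limsup_le_limsup hev ?_ ?_
    · exact Filter.isCoboundedUnder_le_of_le _
        (fun v => mul_nonneg (norm_nonneg v) (abs_nonneg _))
    · exact hT.isBoundedUnder_le
  have heq : Filter.limsup ψ (Filter.comap norm Filter.atTop) = K * (1 / 2) :=
    hT.limsup_eq
  have hfinal : K * (1 / 2) = (⨆ p, |F p|) / 2 *
      (volume (Metric.ball (0 : EuclideanSpace ℝ (Fin (m + 1 - 1))) 1)).toReal *
      r ^ (m + 1 - 1) * h := by
    show K * (1 / 2) = M / 2 * B * r ^ m * h
    rw [hKdef]; ring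
  exact le_trans hls (le_of_eq (heq.trans hfinal))
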